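/- Let (X_t) be generated by diffusion condensation with kernels K_t satisfying 0 < δ ≤ K_t(i,j) ≤ 1 for all t and all i,j. Then diam(X_{t+1}) ≤ (1 − δ) diam(X_t) for all t, and consequently diam(X_t) ≤ (1−δ)^t diam(X_0). -/

import Mathlib

/-- Key averaging lemma: the distance between two convex combinations of points is bounded
by `(1 - overlap) * diam`. -/
lemma key_aux {d N : ℕ} (x : Fin N → EuclideanSpace ℝ (Fin d))
    (a b : Fin N → ℝ) (ha : ∀ k, 0 ≤ a k) (hb : ∀ k, 0 ≤ b k)
    (hsa : ∑ k, a k = 1) (hsb : ∑ k, b k = 1) :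
    ‖(∑ k, a k • x k) - ∑ k, b k • x k‖ ≤
      (1 - ∑ k, min (a k) (b k)) * Metric.diam (Set.range x) := by
  set D := Metric.diam (Set.range x) with hDdef
  have hD : 0 ≤ D := Metric.diam_nonneg
  set p : Fin N → ℝ := fun k => a k - min (a k) (b k) with hp
  set q : Fin N → ℝ := fun k => b k - min (a k) (b k) with hq
  have hpn : ∀ k, 0 ≤ p k := fun k => sub_nonneg.2 (min_le_left _ _)
  have hqn : ∀ k, 0 ≤ q k := fun k => sub_nonneg.2 (min_le_right _ _)
  set s : ℝ := 1 - ∑ k, min (a k) (b k) with hs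
  have hps : ∑ k, p k = s := by simp [hp, Finset.sum_sub_distrib, hsa, hs]
  have hqs : ∑ k, q k = s := by simp [hq, Finset.sum_sub_distrib, hsb, hs]
  have hsnn : 0 ≤ s := hps ▸ Finset.sum_nonneg fun k _ => hpn k
  have hdiff : (∑ k, a k • x k) - ∑ k, b k • x k
      = (∑ k, p k • x k) - ∑ k, q k • x k := by
    simp [hp, hq, sub_smul, Finset.sum_sub_distrib]
    try abel
  rcases eq_or_lt_of_le hsnn with hs0 | hs0
  · -- s = 0 : then p = q = 0, so a = b
    have hp0 : ∀ k ∈ (Finset.univ : Finset (Fin N)), p k = 0 :=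
      (Finset.sum_eq_zero_iff_of_nonneg (fun k _ => hpn k)).1 (by rw [hps, ← hs0])
    have hq0 : ∀ k ∈ (Finset.univ : Finset (Fin N)), q k = 0 :=
      (Finset.sum_eq_zero_iff_of_nonneg (fun k _ => hqn k)).1 (by rw [hqs, ← hs0])
    have hab : ∀ k, a k = b k := by
      intro k
      have h1 := hp0 k (Finset.mem_univ k)
      have h2 := hq0 k (Finset.mem_univ k)
      simp only [hp] at h1
      simp only [hq] at h2
      linarith
    have : (∑ k, a k • x k) = ∑ k, b k • x k :=
      Finset.sum_congr rfl fun k _ => by rw [hab k]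
    rw [this, sub_self, norm_zero]
    exact mul_nonneg hsnn hD
  · -- s > 0
    have hbound : ∀ k l : Fin N, dist (x k) (x l) ≤ D :=
      fun k l => Metric.dist_le_diam_of_mem ((Set.finite_range x).isBounded)
        (Set.mem_range_self k) (Set.mem_range_self l)
    have hkey : (∑ k, ∑ l, (p k * q l) • (x k - x l))
        = s • ((∑ k, p k • x k) - ∑ l, q l • x l) := by
      have h1 : (∑ k, ∑ l, (p k * q l) • x k) = s • ∑ k, p k • x k := by
        rw [Finset.smul_sum]
        refine Finset.sum_congr rfl fun k _ => ?_
        rw [← Finset.sum_smul, ← Finset.mul_sum, hqs, smul_smul, mul_comm]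
      have h2 : (∑ k, ∑ l, (p k * q l) • x l) = s • ∑ l, q l • x l := by
        rw [Finset.sum_comm, Finset.smul_sum]
        refine Finset.sum_congr rfl fun l _ => ?_
        rw [← Finset.sum_smul, ← Finset.sum_mul, hps, mul_smul]
      simp only [smul_sub, smul_sub, ← h1, ← h2, Finset.sum_sub_distrib]
    have hnorm : ‖∑ k, ∑ l, (p k * q l) • (x k - x l)‖ ≤ s * s * D := by
      calc ‖∑ k, ∑ l, (p k * q l) • (x k - x l)‖
          ≤ ∑ k, ∑ l, (p k * q l) * D := by
            refine norm_sum_le_of_le _ fun k _ => ?_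
            refine norm_sum_le_of_le _ fun l _ => ?_
            rw [norm_smul, Real.norm_eq_abs, abs_of_nonneg (mul_nonneg (hpn k) (hqn l))]
            exact mul_le_mul_of_nonneg_left
              (by rw [← dist_eq_norm]; exact hbound k l)
              (mul_nonneg (hpn k) (hqn l))
        _ = s * s * D := by
            simp only [← Finset.sum_mul, ← Finset.mul_sum, hqs, hps]
            try ring
    rw [hdiff]
    have h3 : ‖s • ((∑ k, p k • x k) - ∑ l, q l • x l)‖ ≤ s * s * D := hkey ▸ hnorm
    rw [norm_smul, Real.norm_eq_abs, abs_of_nonneg hsnn] at h3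
    have h4 : s * ‖(∑ k, p k • x k) - ∑ l, q l • x l‖ ≤ s * (s * D) := by
      rw [← mul_assoc]; exact h3
    exact (mul_le_mul_iff_right₀ hs0).mp h4

/-- With kernels bounded below by δ, diffusion condensation contracts the diameter by a
factor (1 - δ) at each step, hence geometrically. -/
theorem stmt_7 {d N : ℕ} (δ : ℝ) (hδ : 0 < δ)
    (X : ℕ → Fin N → EuclideanSpace ℝ (Fin d))
    (K : ℕ → Fin N → Fin N → ℝ)
    (hsym : ∀ t i j, K t i j = K t j i)
    (hKb : ∀ t i j, δ ≤ K t i j ∧ K t i j ≤ 1)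
    (hupd : ∀ t i, X (t + 1) i = (∑ j, K t i j)⁻¹ • ∑ j, K t i j • X t j) :
    (∀ t, Metric.diam (Set.range (X (t + 1))) ≤ (1 - δ) * Metric.diam (Set.range (X t))) ∧
    (∀ t, Metric.diam (Set.range (X t)) ≤ (1 - δ) ^ t * Metric.diam (Set.range (X 0))) := by
  rcases Nat.eq_zero_or_pos N with hN | hN
  · subst hN
    constructor <;> intro t <;>
      simp [Set.range_eq_empty, Metric.diam_empty]
  · have i0 : Fin N := ⟨0, hN⟩
    haveI : Nonempty (Fin N) := ⟨i0⟩
    have hδ1 : δ ≤ 1 := le_trans (hKb 0 i0 i0).1 (hKb 0 i0 i0).2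
    have main : ∀ t, Metric.diam (Set.range (X (t + 1))) ≤
        (1 - δ) * Metric.diam (Set.range (X t)) := by
      intro t
      set D := Metric.diam (Set.range (X t)) with hDdef
      have hD : 0 ≤ D := Metric.diam_nonneg
      have hS : ∀ i : Fin N, 0 < ∑ j, K t i j := by
        intro i
        refine Finset.sum_pos (fun j _ => lt_of_lt_of_le hδ (hKb t i j).1) ?_
        exact Finset.univ_nonempty
      have hSN : ∀ i : Fin N, (∑ j, K t i j) ≤ N := by
        intro i
        calc (∑ j, K t i j) ≤ ∑ _j : Fin N, (1:ℝ) :=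
          Finset.sum_le_sum fun j _ => (hKb t i j).2
        _ = N := by simp
      set a : Fin N → Fin N → ℝ := fun i k => K t i k / ∑ j, K t i j with ha
      have han : ∀ i k, 0 ≤ a i k := fun i k =>
        div_nonneg (le_trans hδ.le (hKb t i k).1) (hS i).le
      have has : ∀ i, ∑ k, a i k = 1 := fun i => by
        rw [ha]; rw [← Finset.sum_div, div_self (hS i).ne']
      have halb : ∀ i k, δ / N ≤ a i k := by
        intro i k
        exact div_le_div₀ (le_trans hδ.le (hKb t i k).1) (hKb t i k).1 (hS i) (hSN i)
      have hX : ∀ i, X (t + 1) i = ∑ k, a i k • X t k := by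
        intro i
        rw [hupd, Finset.smul_sum]
        refine Finset.sum_congr rfl fun k _ => ?_
        rw [smul_smul]
        simp only [ha]
        rw [div_eq_inv_mul]
      refine Metric.diam_le_of_forall_dist_le (mul_nonneg (by linarith) hD) ?_
      rintro y ⟨i, rfl⟩ z ⟨j, rfl⟩
      rw [dist_eq_norm, hX i, hX j]
      calc ‖(∑ k, a i k • X t k) - ∑ k, a j k • X t k‖
          ≤ (1 - ∑ k, min (a i k) (a j k)) * D :=
            key_aux (X t) (a i) (a j) (han i) (han j) (has i) (has j)
        _ ≤ (1 - δ) * D := by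
            apply mul_le_mul_of_nonneg_right _ hD
            have : (δ : ℝ) ≤ ∑ k, min (a i k) (a j k) := by
              calc (δ:ℝ) = ∑ _k : Fin N, δ / N := by
                    rw [Finset.sum_const, Finset.card_univ, Fintype.card_fin,
                      nsmul_eq_mul]
                    field_simp
                _ ≤ ∑ k, min (a i k) (a j k) :=
                    Finset.sum_le_sum fun k _ => le_min (halb i k) (halb j k)
            linarith
    refine ⟨main, ?_⟩
    intro t
    induction t with
    | zero => simp
    | succ n ih =>
      calc Metric.diam (Set.range (X (n + 1)))
          ≤ (1 - δ) * Metric.diam (Set.range (X n)) := main n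
        _ ≤ (1 - δ) * ((1 - δ) ^ n * Metric.diam (Set.range (X 0))) :=
            mul_le_mul_of_nonneg_left ih (by linarith)
        _ = (1 - δ) ^ (n + 1) * Metric.diam (Set.range (X 0)) := by ring
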